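/- arXiv:1005.2831 — 4 statements merged into one kernel-verified Lean document; each statement's English description precedes it below -/
import Mathlib

section
/- Let C be a category and let D be a symmetric 2-group. Equip the functor category C ⥤ D with the pointwise monoidal structure ((F ⊗ G)(X) = F(X) ⊗ G(X), unit the constant functor at 𝟙_D). Then every object of C ⥤ D is invertible: for every functor F : C ⥤ D there exist a functor F* : C ⥤ D (with F*(X) = (F X)* on objects) and a natural isomorphism F* ⊗ F ≅ 𝟙, where 𝟙 denotes the constant functor at the monoidal unit of D. -/
open CategoryTheory MonoidalCategory

universe v₁ v₂ u₁ u₂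

section Aux

variable {D : Type u₂} [Groupoid.{v₂} D] [MonoidalCategory D] [SymmetricCategory D]

/-- If `B ⊗ A ≅ 𝟙`, then `tensorRight A` is an equivalence. -/
noncomputable def tensorRightEquiv (A B : D) (h : B ⊗ A ≅ 𝟙_ D) : D ≌ D :=
  CategoryTheory.Equivalence.mk (tensorRight A) (tensorRight B)
    (NatIso.ofComponents
      (fun Z => (ρ_ Z).symm ≪≫ whiskerLeftIso Z ((β_ A B) ≪≫ h).symm ≪≫ (α_ Z A B).symm)
      (by
        intro Z Z' f
        dsimp only [Functor.id_obj, Functor.id_map, Functor.comp_obj, Functor.comp_map,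
          Functor.flip_obj_obj, Functor.flip_obj_map, curriedTensor_obj_obj, curriedTensor_map_app]
        simp only [Iso.trans_hom, Iso.symm_hom, whiskerLeftIso_hom]
        rw [rightUnitor_inv_naturality_assoc, ← whisker_exchange_assoc,
          associator_inv_naturality_left]
        simp))
    (NatIso.ofComponents
      (fun Z => α_ Z B A ≪≫ whiskerLeftIso Z h ≪≫ ρ_ Z)
      (by
        intro Z Z' f
        dsimp only [Functor.id_obj, Functor.id_map, Functor.comp_obj, Functor.comp_map,
          Functor.flip_obj_obj, Functor.flip_obj_map, curriedTensor_obj_obj, curriedTensor_map_app]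
        simp only [Iso.trans_hom, whiskerLeftIso_hom]
        rw [associator_naturality_left_assoc, ← whisker_exchange_assoc]
        simp))

noncomputable def whiskerPreimage (A B : D) (h : B ⊗ A ≅ 𝟙_ D) {Z Z' : D}
    (w : Z ⊗ A ⟶ Z' ⊗ A) : Z ⟶ Z' :=
  (tensorRightEquiv A B h).fullyFaithfulFunctor.preimage (X := Z) (Y := Z') w

lemma whiskerPreimage_spec (A B : D) (h : B ⊗ A ≅ 𝟙_ D) {Z Z' : D}
    (w : Z ⊗ A ⟶ Z' ⊗ A) : whiskerPreimage A B h w ▷ A = w := by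
  have h2 := (tensorRightEquiv A B h).fullyFaithfulFunctor.map_preimage (X := Z) (Y := Z') w
  exact h2

lemma whiskerRight_inj (A B : D) (h : B ⊗ A ≅ 𝟙_ D) {Z Z' : D}
    {u v : Z ⟶ Z'} (huv : u ▷ A = v ▷ A) : u = v := by
  apply (tensorRightEquiv A B h).fullyFaithfulFunctor.map_injective (X := Z) (Y := Z')
  exact huv

end Aux

/-- Let `C` be a category and `D` a symmetric 2-group, i.e. a symmetric
monoidal groupoid in which every object is invertible (witnessed here by the data
`star : D → D` and `η : ∀ X, star X ⊗ X ≅ 𝟙_ D`).  Equip the functor category `C ⥤ D` with the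
pointwise monoidal structure.  Then every object of `C ⥤ D` is invertible: for every functor
`F : C ⥤ D` there is a functor `F*` with `F*(X) = (F X)*` on objects, together with a natural
isomorphism `F* ⊗ F ≅ 𝟙`, where `𝟙` is the constant functor at the unit of `D`. -/
theorem functorCategory_objects_invertible
    {C : Type u₁} [Category.{v₁} C]
    {D : Type u₂} [Groupoid.{v₂} D] [MonoidalCategory D] [SymmetricCategory D]
    (star : D → D) (η : ∀ X : D, star X ⊗ X ≅ 𝟙_ D) (F : C ⥤ D) :
    ∃ Fs : C ⥤ D, (∀ X : C, Fs.obj X = star (F.obj X)) ∧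
      Nonempty ((Fs ⊗ F : C ⥤ D) ≅ 𝟙_ (C ⥤ D)) := by
  classical
  let u : ∀ {X Y : C}, (X ⟶ Y) → (star (F.obj X) ⟶ star (F.obj Y)) := fun {X Y} f =>
    whiskerPreimage (F.obj X) (star (F.obj X)) (η (F.obj X))
      ((η (F.obj X)).hom ≫ (η (F.obj Y)).inv ≫ (star (F.obj Y) ◁ inv (F.map f)))
  have hu : ∀ {X Y : C} (f : X ⟶ Y),
      u f ▷ F.obj X =
        (η (F.obj X)).hom ≫ (η (F.obj Y)).inv ≫ (star (F.obj Y) ◁ inv (F.map f)) :=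
    fun {X Y} f => whiskerPreimage_spec _ _ _ _
  -- the characterizing property
  have hP : ∀ {X Y : C} (f : X ⟶ Y),
      (u f ⊗ₘ F.map f) ≫ (η (F.obj Y)).hom = (η (F.obj X)).hom := by
    intro X Y f
    rw [MonoidalCategory.tensorHom_def, Category.assoc, hu f]
    slice_lhs 3 4 =>
      rw [← MonoidalCategory.whiskerLeft_comp, IsIso.inv_hom_id, MonoidalCategory.whiskerLeft_id]
    simp
  -- uniqueness of such morphisms
  have huniq : ∀ {X Y : C} (f : X ⟶ Y) (v : star (F.obj X) ⟶ star (F.obj Y)),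
      (v ⊗ₘ F.map f) ≫ (η (F.obj Y)).hom = (η (F.obj X)).hom → v = u f := by
    intro X Y f v hv
    have h2 := hP f
    rw [← hv] at h2
    have h3 : u f ⊗ₘ F.map f = v ⊗ₘ F.map f :=
      (cancel_mono (η (F.obj Y)).hom).1 h2
    rw [MonoidalCategory.tensorHom_def, MonoidalCategory.tensorHom_def] at h3
    have h4 : u f ▷ F.obj X = v ▷ F.obj X :=
      (cancel_mono (star (F.obj Y) ◁ F.map f)).1 h3
    exact (whiskerRight_inj (F.obj X) (star (F.obj X)) (η (F.obj X)) h4).symm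
  refine ⟨{ obj := fun X => star (F.obj X), map := fun f => u f,
            map_id := ?_, map_comp := ?_ }, fun X => rfl, ⟨?_⟩⟩
  · intro X
    refine (huniq (𝟙 X) (𝟙 _) ?_).symm
    simp
  · intro X Y Z f g
    refine (huniq (f ≫ g) (u f ≫ u g) ?_).symm
    rw [F.map_comp, ← tensorHom_comp_tensorHom, Category.assoc, hP g, hP f]
  · exact NatIso.ofComponents (fun X => η (F.obj X))
      (by intro X Y f
          simp only [Monoidal.tensorObj_map, Monoidal.tensorUnit_map]
          erw [hP f]
          simp)
end

section
/- Let A and B be symmetric 2-groups, F : A ⥤ B a homomorphism of symmetric 2-groups, and Ker F the category of pairs (A, a : F(A) ⟶ 𝟙_B) with morphisms f satisfying a′ ∘ F(f) = a, with forgetful functor e_F : Ker F ⥤ A. Let ε_F : e_F ⋙ F ⟹ 0 be the natural transformation to the constant functor at 𝟙_B whose component at (A, a) is a. Then (Ker F, e_F, ε_F) has the universal property of the kernel: for every category K, every functor G : K ⥤ A, and every natural transformation φ : G ⋙ F ⟹ 0, the assignment G′(k) = (G(k), φ_k) defines a functor G′ : K ⥤ Ker F together with a natural isomorphism φ′ :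 G′ ⋙ e_F ≅ G whose component at each k is the identity, compatible with φ and ε_F in the sense that φ_k ∘ F(φ′_k) = (ε_F)_{G′(k)} for all k; moreover, if (G″, φ″) is another such pair satisfying the same compatibility, then there is a unique natural transformation ψ : G″ ⟹ G′ with φ′_k ∘ e_F(ψ_k) = φ″_k for all k. -/
open CategoryTheory MonoidalCategory Functor.LaxMonoidal Functor.OplaxMonoidal

universe v₁ v₂ v₃ u₁ u₂ u₃

variable {A : Type u₁} [Groupoid.{v₁} A] [MonoidalCategory A] [SymmetricCategory A]
variable {B : Type u₂} [Groupoid.{v₂} B] [MonoidalCategory B] [SymmetricCategory B]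

/-- Objects of the kernel `Ker F`: pairs `(A, a : F(A) ⟶ 𝟙_ B)`. -/
structure KerObj (F : A ⥤ B) [F.Braided] where
  pt : A
  ar : F.obj pt ⟶ 𝟙_ B

variable (F : A ⥤ B) [F.Braided]

/-- Morphisms `(A, a) ⟶ (A', a')` in `Ker F` are morphisms `f : A ⟶ A'` with `a' ∘ F(f) = a`. -/
instance : Category (KerObj F) where
  Hom X Y := { f : X.pt ⟶ Y.pt // F.map f ≫ Y.ar = X.ar }
  id X := ⟨𝟙 X.pt, by simp⟩
  comp {X Y Z} f g := ⟨f.1 ≫ g.1, by rw [F.map_comp, Category.assoc, g.2, f.2]⟩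
  id_comp f := Subtype.ext (by simp)
  comp_id f := Subtype.ext (by simp)
  assoc f g h := Subtype.ext (by simp)

/-- The forgetful functor `e_F : Ker F ⥤ A`. -/
def eF : KerObj F ⥤ A where
  obj X := X.pt
  map f := f.1

/-- The 2-morphism `ε_F : e_F ⋙ F ⟹ 0`, whose component at `(A, a)` is `a`; here `0` is the
constant functor at `𝟙_ B`. -/
def epsF : eF F ⋙ F ⟶ (Functor.const (KerObj F)).obj (𝟙_ B) where
  app X := X.ar
  naturality X Y f := by exact f.2.trans (Category.comp_id X.ar).symm

/-- The canonical comparison functor into the kernel: given `G : K ⥤ A` and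
`φ : G ⋙ F ⟹ 0`, set `G'(k) = (G(k), φ_k)`. -/
def liftToKer (K : Type u₃) [Category.{v₃} K] (G : K ⥤ A)
    (φ : G ⋙ F ⟶ (Functor.const K).obj (𝟙_ B)) : K ⥤ KerObj F where
  obj k := ⟨G.obj k, φ.app k⟩
  map {k k'} f := ⟨G.map f, by simpa using φ.naturality f⟩
  map_id k := Subtype.ext (by simp; rfl)
  map_comp f g := Subtype.ext (by simp; rfl)

/-- `(Ker F, e_F, ε_F)` has the universal property of the kernel: for every
category `K`, functor `G : K ⥤ A` and natural transformation `φ : G ⋙ F ⟹ 0`, the functor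
`G' = liftToKer` satisfies `G'(k) = (G(k), φ_k)` and comes with a natural isomorphism
`φ' : G' ⋙ e_F ≅ G` with identity components, compatible with `φ` and `ε_F`; moreover for any
pair `(G'', φ'')` satisfying the same compatibility there is a unique natural transformation
`ψ : G'' ⟹ G'` with `φ'_k ∘ e_F(ψ_k) = φ''_k` for all `k`. -/
theorem kernel_universal_property
    (hA : ∀ X : A, ∃ Y : A, Nonempty (Y ⊗ X ≅ 𝟙_ A))
    (hB : ∀ X : B, ∃ Y : B, Nonempty (Y ⊗ X ≅ 𝟙_ B))
    (K : Type u₃) [Category.{v₃} K] (G : K ⥤ A)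
    (φ : G ⋙ F ⟶ (Functor.const K).obj (𝟙_ B)) :
    (∀ k : K, (liftToKer F K G φ).obj k = ⟨G.obj k, φ.app k⟩) ∧
    ∃ φ' : liftToKer F K G φ ⋙ eF F ≅ G,
      (∀ k : K, φ'.hom.app k = 𝟙 (G.obj k)) ∧
      (∀ k : K, F.map (φ'.hom.app k) ≫ φ.app k = (epsF F).app ((liftToKer F K G φ).obj k)) ∧
      (∀ (G'' : K ⥤ KerObj F) (φ'' : G'' ⋙ eF F ≅ G),
        (∀ k : K, F.map (φ''.hom.app k) ≫ φ.app k = (epsF F).app (G''.obj k)) →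
        ∃! ψ : G'' ⟶ liftToKer F K G φ,
          ∀ k : K, (eF F).map (ψ.app k) ≫ φ'.hom.app k = φ''.hom.app k) := by
  refine ⟨fun k => rfl, Iso.refl _, fun k => rfl, fun k => by exact (congrArg (· ≫ φ.app k) (F.map_id _)).trans (Category.id_comp _), ?_⟩
  intro G'' φ'' hcomp
  refine ⟨⟨fun k => ⟨φ''.hom.app k, by exact hcomp k⟩, ?_⟩, ?_, ?_⟩
  · intro k k' f
    apply Subtype.ext
    exact φ''.hom.naturality f
  · intro k
    simp [eF]
    exact Category.comp_id _
  · intro ψ hψ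
    ext k
    apply Subtype.ext
    exact (Category.comp_id (ψ.app k).1).symm.trans (hψ k)
end

section
/- Let A and B be symmetric 2-groups and F : A ⥤ B a homomorphism of symmetric 2-groups. On the type of objects of B, define B₁ ∼ B₂ iff there exist an object A of A and a morphism B₁ ⟶ F(A) ⊗ B₂ in B. Then ∼ is an equivalence relation which is compatible with the tensor product of B (if B₁ ∼ B₁′ and B₂ ∼ B₂′ then B₁ ⊗ B₂ ∼ B₁′ ⊗ B₂′), and the quotient of the objects of B by ∼ is a commutative group under the operation induced by ⊗, with identity the class of 𝟙_B and with the inverse of the class of B given by the class of B*. (This group is the morphism group of the one-object groupoid Copip F.) -/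
open CategoryTheory MonoidalCategory

universe v₁ v₂ u₁ u₂

/-- The relation on objects of `B`: `B₁ ∼ B₂` iff there are an object `A₀` of `A` and a
morphism `B₁ ⟶ F(A₀) ⊗ B₂` in `B`.  (Its quotient is the morphism set of the one-object
groupoid `Copip F`.) -/
def copipRel {A : Type u₁} [Groupoid.{v₁} A] [MonoidalCategory A] [SymmetricCategory A]
    {B : Type u₂} [Groupoid.{v₂} B] [MonoidalCategory B] [SymmetricCategory B]
    (F : A ⥤ B) : B → B → Prop :=
  fun B₁ B₂ => ∃ A₀ : A, Nonempty (B₁ ⟶ F.obj A₀ ⊗ B₂)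

section Aux

variable {A : Type u₁} [Groupoid.{v₁} A] [MonoidalCategory A] [SymmetricCategory A]
    {B : Type u₂} [Groupoid.{v₂} B] [MonoidalCategory B] [SymmetricCategory B]
    (F : A ⥤ B) [F.Braided]

lemma copipRel_of_hom {X Y : B} (f : X ⟶ Y) : copipRel F X Y :=
  ⟨𝟙_ A, ⟨f ≫ (λ_ Y).inv ≫ (Functor.LaxMonoidal.ε F ▷ Y)⟩⟩

lemma copipRel_refl (X : B) : copipRel F X X := copipRel_of_hom F (𝟙 X)

lemma copipRel_trans {X Y Z : B} (h₁ : copipRel F X Y) (h₂ : copipRel F Y Z) :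
    copipRel F X Z := by
  obtain ⟨A₀, ⟨f⟩⟩ := h₁
  obtain ⟨A₁, ⟨g⟩⟩ := h₂
  exact ⟨A₀ ⊗ A₁, ⟨f ≫ (F.obj A₀ ◁ g) ≫ (α_ _ _ _).inv ≫
    (Functor.LaxMonoidal.μ F A₀ A₁ ▷ Z)⟩⟩

lemma copipRel_symm (hA : ∀ X : A, ∃ Y : A, Nonempty (Y ⊗ X ≅ 𝟙_ A))
    {X Y : B} (h : copipRel F X Y) : copipRel F Y X := by
  obtain ⟨A₀, ⟨f⟩⟩ := h
  obtain ⟨A₁, ⟨e⟩⟩ := hA A₀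
  refine ⟨A₁, ⟨(λ_ Y).inv ≫ (Functor.LaxMonoidal.ε F ▷ Y) ≫ (F.map e.inv ▷ Y) ≫
    (Functor.OplaxMonoidal.δ F A₁ A₀ ▷ Y) ≫ (α_ _ _ _).hom ≫
    (F.obj A₁ ◁ Groupoid.inv f)⟩⟩

lemma copipRel_tensor {B₁ B₁' B₂ B₂' : B} (h₁ : copipRel F B₁ B₁')
    (h₂ : copipRel F B₂ B₂') : copipRel F (B₁ ⊗ B₂) (B₁' ⊗ B₂') := by
  obtain ⟨A₀, ⟨f⟩⟩ := h₁
  obtain ⟨A₁, ⟨g⟩⟩ := h₂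
  refine ⟨A₀ ⊗ A₁, ⟨(f ⊗ₘ g) ≫ (α_ _ _ _).hom ≫
    (F.obj A₀ ◁ ((α_ B₁' (F.obj A₁) B₂').inv ≫ ((β_ B₁' (F.obj A₁)).hom ▷ B₂') ≫
      (α_ _ _ _).hom)) ≫ (α_ _ _ _).inv ≫
    (Functor.LaxMonoidal.μ F A₀ A₁ ▷ (B₁' ⊗ B₂'))⟩⟩

end Aux

/-- **Statement 9.** Let `A`, `B` be symmetric 2-groups (symmetric monoidal groupoids in which
every object is invertible; for `B` the inverses are given by the data `star`, `η`) and
`F : A ⥤ B` a homomorphism of symmetric 2-groups.  The relation `copipRel F` is an equivalence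
relation compatible with the tensor product of `B`, and the quotient of the objects of `B` by
it is a commutative group under the operation induced by `⊗`, with identity the class of
`𝟙_ B` and inverse the class of `B*`. -/
theorem copip_morphisms_commGroup
    {A : Type u₁} [Groupoid.{v₁} A] [MonoidalCategory A] [SymmetricCategory A]
    {B : Type u₂} [Groupoid.{v₂} B] [MonoidalCategory B] [SymmetricCategory B]
    (hA : ∀ X : A, ∃ Y : A, Nonempty (Y ⊗ X ≅ 𝟙_ A))
    (star : B → B) (η : ∀ X : B, star X ⊗ X ≅ 𝟙_ B)
    (F : A ⥤ B) [F.Braided] :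
    Equivalence (copipRel F) ∧
    (∀ B₁ B₁' B₂ B₂' : B, copipRel F B₁ B₁' → copipRel F B₂ B₂' →
      copipRel F (B₁ ⊗ B₂) (B₁' ⊗ B₂')) ∧
    ∃ G : CommGroup (Quot (copipRel F)),
      (∀ B₁ B₂ : B,
        G.mul (Quot.mk (copipRel F) B₁) (Quot.mk (copipRel F) B₂) =
          Quot.mk (copipRel F) (B₁ ⊗ B₂)) ∧
      (G.one = Quot.mk (copipRel F) (𝟙_ B)) ∧
      (∀ X : B, G.inv (Quot.mk (copipRel F) X) = Quot.mk (copipRel F) (star X)) := by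
  have hrefl : ∀ X : B, copipRel F X X := copipRel_refl F
  have htrans : ∀ {X Y Z : B}, copipRel F X Y → copipRel F Y Z → copipRel F X Z :=
    fun h₁ h₂ => copipRel_trans F h₁ h₂
  have hsymm : ∀ {X Y : B}, copipRel F X Y → copipRel F Y X :=
    fun h => copipRel_symm F hA h
  have hequiv : Equivalence (copipRel F) := ⟨hrefl, hsymm, htrans⟩
  have htensor : ∀ B₁ B₁' B₂ B₂' : B, copipRel F B₁ B₁' → copipRel F B₂ B₂' →
      copipRel F (B₁ ⊗ B₂) (B₁' ⊗ B₂') :=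
    fun _ _ _ _ h₁ h₂ => copipRel_tensor F h₁ h₂
  have hiso : ∀ {X Y : B}, (X ≅ Y) → copipRel F X Y := fun e => copipRel_of_hom F e.hom
  refine ⟨hequiv, htensor, ?_⟩
  -- the multiplication
  let mul : Quot (copipRel F) → Quot (copipRel F) → Quot (copipRel F) :=
    Quot.map₂ (fun X Y => X ⊗ Y)
      (fun a b₁ b₂ h => htensor _ _ _ _ (hrefl a) h)
      (fun a₁ a₂ b h => htensor _ _ _ _ h (hrefl b))
  have hmul : ∀ X Y : B, mul (Quot.mk _ X) (Quot.mk _ Y) = Quot.mk _ (X ⊗ Y) :=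
    fun _ _ => rfl
  -- the inverse
  have hinvwd : ∀ X Y : B, copipRel F X Y →
      Quot.mk (copipRel F) (star X) = Quot.mk (copipRel F) (star Y) := by
    intro X Y h
    apply Quot.sound
    have s1 : copipRel F (star X) (star X ⊗ 𝟙_ B) := hiso (ρ_ (star X)).symm
    have s2 : copipRel F (𝟙_ B) (Y ⊗ star Y) :=
      copipRel_of_hom F ((η Y).inv ≫ (β_ (star Y) Y).hom)
    have s3 : copipRel F (star X ⊗ 𝟙_ B) (star X ⊗ (Y ⊗ star Y)) :=
      htensor _ _ _ _ (hrefl _) s2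
    have s4 : copipRel F (star X ⊗ (Y ⊗ star Y)) ((star X ⊗ Y) ⊗ star Y) :=
      hiso (α_ _ _ _).symm
    have s5 : copipRel F ((star X ⊗ Y) ⊗ star Y) ((star X ⊗ X) ⊗ star Y) :=
      htensor _ _ _ _ (htensor _ _ _ _ (hrefl _) (hsymm h)) (hrefl _)
    have s6 : copipRel F ((star X ⊗ X) ⊗ star Y) (𝟙_ B ⊗ star Y) :=
      htensor _ _ _ _ (hiso (η X)) (hrefl _)
    have s7 : copipRel F (𝟙_ B ⊗ star Y) (star Y) := hiso (λ_ (star Y))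
    exact htrans s1 (htrans s3 (htrans s4 (htrans s5 (htrans s6 s7))))
  let inv : Quot (copipRel F) → Quot (copipRel F) :=
    Quot.lift (fun X => Quot.mk (copipRel F) (star X)) hinvwd
  refine ⟨{
    mul := mul
    one := Quot.mk _ (𝟙_ B)
    inv := inv
    mul_assoc := by
      intro a b c
      induction a using Quot.ind with | _ X =>
      induction b using Quot.ind with | _ Y =>
      induction c using Quot.ind with | _ Z =>
      exact Quot.sound (hiso (α_ X Y Z))
    one_mul := by
      intro a
      induction a using Quot.ind with | _ X =>
      exact Quot.sound (hiso (λ_ X))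
    mul_one := by
      intro a
      induction a using Quot.ind with | _ X =>
      exact Quot.sound (hiso (ρ_ X))
    inv_mul_cancel := by
      intro a
      induction a using Quot.ind with | _ X =>
      show mul (inv (Quot.mk _ X)) (Quot.mk _ X) = Quot.mk _ (𝟙_ B)
      have hinv : inv (Quot.mk (copipRel F) X) = Quot.mk (copipRel F) (star X) := rfl
      rw [hinv, hmul]
      exact Quot.sound (hiso (η X))
    mul_comm := by
      intro a b
      induction a using Quot.ind with | _ X =>
      induction b using Quot.ind with | _ Y =>
      exact Quot.sound (hiso (β_ X Y))
  }, hmul, rfl, fun X => rfl⟩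
end

section
/- Let A, B, and K be symmetric 2-groups and F₁ : A ⥤ K, F₂ : B ⥤ K homomorphisms of symmetric 2-groups. Equip the product category A × B with the componentwise symmetric monoidal structure (so A × B is again a symmetric 2-group), and let i₁ : A ⥤ A × B, A ↦ (A, 𝟙_B), and i₂ : B ⥤ A × B, B ↦ (𝟙_A, B), be the canonical inclusions. Then the functor G : A × B ⥤ K defined by G(A, B) = F₁(A) ⊗ F₂(B) admits a monoidal structure compatible with the symmetries, built from the tensorators of F₁ and F₂ and the middle-four interchange isomorphism of K, and there are natural isomorphisms l₁ : i₁ ⋙ G ≅ F₁ and l₂ : i₂ ⋙ G ≅ F₂ whose components are F₁(A) ⊗ F₂(𝟙_B) → F₁(A) ⊗ 𝟙_K → F₁(A) and F₁(𝟙_A) ⊗ F₂(B) → 𝟙_K ⊗ F₂(B) → F₂(B), respectively. -/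
open CategoryTheory MonoidalCategory Functor.LaxMonoidal Functor.OplaxMonoidal

universe v₁ v₂ v₃ u₁ u₂ u₃

variable {A : Type u₁} [Groupoid.{v₁} A] [MonoidalCategory A] [SymmetricCategory A]
variable {B : Type u₂} [Groupoid.{v₂} B] [MonoidalCategory B] [SymmetricCategory B]
variable {K : Type u₃} [Groupoid.{v₃} K] [MonoidalCategory K] [SymmetricCategory K]

/-- The functor `G : A × B ⥤ K`, `(A, B) ↦ F₁(A) ⊗ F₂(B)`. -/
def biprodComparison (F₁ : A ⥤ K) (F₂ : B ⥤ K) : A × B ⥤ K where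
  obj p := F₁.obj p.1 ⊗ F₂.obj p.2
  map f := F₁.map f.1 ⊗ₘ F₂.map f.2
  map_id p := by simp
  map_comp f g := by simp [MonoidalCategory.tensorHom_comp_tensorHom]

/-- In a symmetric monoidal category the middle-four interchange commutes with braidings. -/
lemma tensorμ_braiding_aux {C : Type*} [Category C] [MonoidalCategory C] [SymmetricCategory C]
    (a b c d : C) :
    tensorμ a b c d ≫ ((β_ a c).hom ⊗ₘ (β_ b d).hom) =
      (β_ (a ⊗ b) (c ⊗ d)).hom ≫ tensorμ c d a b := by
  dsimp only [tensorμ]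
  simp only [MonoidalCategory.tensorHom_def, BraidedCategory.braiding_tensor_left_hom,
    BraidedCategory.braiding_tensor_right_hom]
  calc
    _ = 𝟙 _ ⊗≫ a ◁ (β_ b c).hom ▷ d ⊗≫ (β_ a c).hom ▷ b ▷ d ⊗≫ c ◁ a ◁ (β_ b d).hom ⊗≫
        c ◁ ((β_ a d).hom ≫ (β_ d a).hom) ▷ b ⊗≫ 𝟙 _ := by
      rw [SymmetricCategory.symmetry]; monoidal
    _ = _ := by monoidal

/-- **Statement 16.** Let `A`, `B`, `K` be symmetric 2-groups and `F₁ : A ⥤ K`, `F₂ : B ⥤ K`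
homomorphisms of symmetric 2-groups.  Equip `A × B` with the componentwise monoidal
structure, and let `i₁ : A ⥤ A × B`, `i₂ : B ⥤ A × B` be the canonical inclusions
`A ↦ (A, 𝟙_B)`, `B ↦ (𝟙_A, B)`.  Then the functor `G(A, B) = F₁(A) ⊗ F₂(B)` admits a lax
monoidal structure, built from the tensorators of `F₁` and `F₂` and the middle-four
interchange of `K`, which is compatible with the symmetries, and there are natural
isomorphisms `l₁ : i₁ ⋙ G ≅ F₁` and `l₂ : i₂ ⋙ G ≅ F₂` with the indicated components. -/
theorem biproduct_comparison_monoidal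
    (hA : ∀ X : A, ∃ Y : A, Nonempty (Y ⊗ X ≅ 𝟙_ A))
    (hB : ∀ X : B, ∃ Y : B, Nonempty (Y ⊗ X ≅ 𝟙_ B))
    (hK : ∀ X : K, ∃ Y : K, Nonempty (Y ⊗ X ≅ 𝟙_ K))
    (F₁ : A ⥤ K) [F₁.Braided] (F₂ : B ⥤ K) [F₂.Braided] :
    (∃ h : (biprodComparison F₁ F₂).LaxMonoidal,
      (Functor.LaxMonoidal.ε (biprodComparison F₁ F₂) (self := h) = (λ_ (𝟙_ K)).inv ≫ (ε F₁ ⊗ₘ ε F₂)) ∧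
      (∀ X Y : A × B, Functor.LaxMonoidal.μ (biprodComparison F₁ F₂) (self := h) X Y =
        tensorμ (F₁.obj X.1) (F₂.obj X.2) (F₁.obj Y.1) (F₂.obj Y.2) ≫
          (μ F₁ X.1 Y.1 ⊗ₘ μ F₂ X.2 Y.2)) ∧
      (∀ X Y : A × B,
        Functor.LaxMonoidal.μ (biprodComparison F₁ F₂) (self := h) X Y ≫
            (biprodComparison F₁ F₂).map ((β_ X.1 Y.1).hom, (β_ X.2 Y.2).hom) =
          (β_ ((biprodComparison F₁ F₂).obj X) ((biprodComparison F₁ F₂).obj Y)).hom ≫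
            Functor.LaxMonoidal.μ (biprodComparison F₁ F₂) (self := h) Y X)) ∧
    (∃ l₁ : Prod.sectL A (𝟙_ B) ⋙ biprodComparison F₁ F₂ ≅ F₁,
      ∀ X : A, l₁.hom.app X = (𝟙 (F₁.obj X) ⊗ₘ η F₂) ≫ (ρ_ (F₁.obj X)).hom) ∧
    (∃ l₂ : Prod.sectR (𝟙_ A) B ⋙ biprodComparison F₁ F₂ ≅ F₂,
      ∀ X : B, l₂.hom.app X = (η F₁ ⊗ₘ 𝟙 (F₂.obj X)) ≫ (λ_ (F₂.obj X)).hom) := by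
  refine ⟨⟨inferInstanceAs ((F₁.prod F₂ ⋙ tensor K).LaxMonoidal), rfl, fun X Y => rfl, ?_⟩,
    ⟨NatIso.ofComponents
      (fun X => tensorIso (Iso.refl _) (Functor.Monoidal.εIso F₂).symm ≪≫ ρ_ (F₁.obj X))
      (fun f => ?_), fun X => rfl⟩,
    ⟨NatIso.ofComponents
      (fun X => tensorIso (Functor.Monoidal.εIso F₁).symm (Iso.refl _) ≪≫ λ_ (F₂.obj X))
      (fun f => ?_), fun X => rfl⟩⟩
  · intro X Y
    show (tensorμ _ _ _ _ ≫ (μ F₁ X.1 Y.1 ⊗ₘ μ F₂ X.2 Y.2)) ≫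
        (F₁.map (β_ X.1 Y.1).hom ⊗ₘ F₂.map (β_ X.2 Y.2).hom) =
      (β_ _ _).hom ≫ tensorμ _ _ _ _ ≫ (μ F₁ Y.1 X.1 ⊗ₘ μ F₂ Y.2 X.2)
    rw [Category.assoc, tensorHom_comp_tensorHom, Functor.LaxBraided.braided, Functor.LaxBraided.braided,
      ← tensorHom_comp_tensorHom, ← Category.assoc, tensorμ_braiding_aux, Category.assoc]
  · dsimp [biprodComparison, Prod.sectL]
    simp [MonoidalCategory.tensorHom_def, whisker_exchange_assoc, μ_natural_left_assoc,
      ← Functor.map_comp, rightUnitor_naturality]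
    rw [← whisker_exchange_assoc, ← whisker_exchange_assoc, μ_natural_left_assoc,
      ← Functor.map_comp, rightUnitor_naturality]
  · dsimp [biprodComparison, Prod.sectR]
    simp [MonoidalCategory.tensorHom_def, ← whisker_exchange_assoc, μ_natural_right_assoc,
      ← Functor.map_comp, leftUnitor_naturality]
    rw [whisker_exchange_assoc, whisker_exchange_assoc, μ_natural_right_assoc,
      ← Functor.map_comp, leftUnitor_naturality]
end
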